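/- For any prime p, any integer k ≥ 2, and any integer c, one has p · φ_k(p, c) = (-1)^k · ( p · Σ_{0 ≤ j ≤ k, j ≡ c (mod p)} C(k,j) + (2-p)^k - 2^k ). -/

import Mathlib

open Finset

/-- `phi k n c` is the number of `k`-tuples of exceptional units of `ℤ/nℤ`
(i.e. elements `u` with both `u` and `1 - u` units) summing to `c` modulo `n`. -/
noncomputable def phi (k n : ℕ) (c : ℤ) : ℕ :=
  Nat.card {x : Fin k → ZMod n //
    (∀ i, IsUnit (x i) ∧ IsUnit (1 - x i)) ∧ ∑ i, x i = (c : ZMod n)}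

section Aux

open scoped Classical

/-- Count of `k`-tuples of exceptional units summing to `d`. -/
noncomputable def Ncnt (p k : ℕ) (d : ZMod p) : ℕ :=
  Nat.card {x : Fin k → ZMod p //
    (∀ i, IsUnit (x i) ∧ IsUnit (1 - x i)) ∧ ∑ i, x i = d}

/-- The corresponding finset. -/
noncomputable def Fcnt (p : ℕ) [NeZero p] (k : ℕ) (d : ZMod p) : Finset (Fin k → ZMod p) :=
  univ.filter (fun x => (∀ i, IsUnit (x i) ∧ IsUnit (1 - x i)) ∧ ∑ i, x i = d)

/-- The finset of exceptional units. -/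
noncomputable def Ecnt (p : ℕ) [NeZero p] : Finset (ZMod p) :=
  univ.filter (fun u => IsUnit u ∧ IsUnit (1 - u))

/-- Binomial sum. -/
noncomputable def Acnt (p k : ℕ) (d : ZMod p) : ℤ :=
  ∑ j ∈ (range (k + 1)).filter (fun j : ℕ => ((j : ℕ) : ZMod p) = d), (k.choose j : ℤ)

variable {p : ℕ} [hp : Fact p.Prime]

lemma Ncnt_eq_card (k : ℕ) (d : ZMod p) : Ncnt p k d = (Fcnt p k d).card := by
  rw [Ncnt, Fcnt, Nat.card_eq_fintype_card]
  exact Fintype.card_subtype _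

lemma Ecnt_eq : Ecnt p = univ \ {0, 1} := by
  ext u
  simp only [Ecnt, mem_filter, mem_univ, true_and, mem_sdiff, mem_insert, mem_singleton,
    isUnit_iff_ne_zero, sub_ne_zero, not_or]
  constructor
  · rintro ⟨h1, h2⟩; exact ⟨h1, fun h => h2 h.symm⟩
  · rintro ⟨h1, h2⟩; exact ⟨h1, fun h => h2 h.symm⟩

lemma Ecnt_card : (Ecnt p).card = p - 2 := by
  rw [Ecnt_eq, card_sdiff_of_subset (subset_univ _), card_univ, ZMod.card]
  congr 1
  rw [card_insert_of_notMem (by simp), card_singleton]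

lemma Ncnt_zero (d : ZMod p) : Ncnt p 0 d = if d = 0 then 1 else 0 := by
  rcases eq_or_ne d 0 with h | h
  · subst h
    rw [if_pos rfl, Ncnt]
    have : Nonempty {x : Fin 0 → ZMod p //
        (∀ i, IsUnit (x i) ∧ IsUnit (1 - x i)) ∧ ∑ i, x i = (0 : ZMod p)} :=
      ⟨⟨fun i => i.elim0, fun i => i.elim0, by simp⟩⟩
    have : Subsingleton {x : Fin 0 → ZMod p //
        (∀ i, IsUnit (x i) ∧ IsUnit (1 - x i)) ∧ ∑ i, x i = (0 : ZMod p)} :=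
      ⟨fun a b => by ext i; exact i.elim0⟩
    exact Nat.card_unique
  · rw [if_neg h, Ncnt]
    have : IsEmpty {x : Fin 0 → ZMod p //
        (∀ i, IsUnit (x i) ∧ IsUnit (1 - x i)) ∧ ∑ i, x i = d} := by
      constructor
      rintro ⟨x, -, hs⟩
      exact h (by simpa using hs.symm)
    exact Nat.card_of_isEmpty

lemma Ncnt_total (k : ℕ) : ∑ d : ZMod p, Ncnt p k d = (p - 2) ^ k := by
  have h1 : (univ.filter (fun x : Fin k → ZMod p => ∀ i, IsUnit (x i) ∧ IsUnit (1 - x i)))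
      = Fintype.piFinset (fun _ : Fin k => Ecnt p) := by
    ext x
    simp [Ecnt, Fintype.mem_piFinset]
  calc ∑ d : ZMod p, Ncnt p k d
      = ∑ d : ZMod p, ((univ.filter (fun x : Fin k → ZMod p =>
          ∀ i, IsUnit (x i) ∧ IsUnit (1 - x i))).filter (fun x => ∑ i, x i = d)).card := by
        refine Finset.sum_congr rfl fun d _ => ?_
        rw [Ncnt_eq_card, Fcnt, filter_filter]
    _ = (univ.filter (fun x : Fin k → ZMod p => ∀ i, IsUnit (x i) ∧ IsUnit (1 - x i))).card :=
        (Finset.card_eq_sum_card_fiberwise (fun x _ => mem_univ _)).symm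
    _ = (p - 2) ^ k := by
        rw [h1, Fintype.card_piFinset]
        simp [Ecnt_card]

lemma Ncnt_succ (k : ℕ) (d : ZMod p) :
    Ncnt p (k + 1) d = ∑ s ∈ Ecnt p, Ncnt p k (d - s) := by
  rw [Ncnt_eq_card]
  have hmap : ∀ x ∈ Fcnt p (k + 1) d, x 0 ∈ Ecnt p := by
    intro x hx
    rw [Fcnt, mem_filter] at hx
    exact mem_filter.mpr ⟨mem_univ _, hx.2.1 0⟩
  rw [Finset.card_eq_sum_card_fiberwise hmap]
  refine Finset.sum_congr rfl fun s hs => ?_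
  rw [Ncnt_eq_card]
  refine Finset.card_bij (fun x _ => Fin.tail x) ?_ ?_ ?_
  · intro x hx
    simp only [Fcnt, mem_filter, mem_univ, true_and] at hx ⊢
    obtain ⟨⟨hQ, hsum⟩, h0⟩ := hx
    refine ⟨fun i => hQ i.succ, ?_⟩
    rw [Fin.sum_univ_succ, h0] at hsum
    have : ∑ i : Fin k, Fin.tail x i = ∑ i : Fin k, x i.succ := rfl
    rw [this]
    exact eq_sub_of_add_eq' hsum
  · intro x hx y hy hxy
    simp only [Fcnt, mem_filter] at hx hy
    funext i
    refine Fin.cases ?_ ?_ i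
    · rw [hx.2, hy.2]
    · intro j
      exact congrFun hxy j
  · intro y hy
    simp only [Fcnt, mem_filter, mem_univ, true_and] at hy ⊢
    obtain ⟨hQ, hsum⟩ := hy
    refine ⟨Fin.cons s y, ⟨⟨fun i => ?_, ?_⟩, ?_⟩, ?_⟩
    · refine Fin.cases ?_ ?_ i
      · simpa using (mem_filter.mp hs).2
      · intro j; simpa using hQ j
    · rw [Fin.sum_univ_succ]
      simp [hsum]
    · simp
    · funext i; simp [Fin.tail_cons]

lemma Acnt_zero (d : ZMod p) : Acnt p 0 d = if (0 : ZMod p) = d then 1 else 0 := by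
  rw [Acnt]
  rcases eq_or_ne (0 : ZMod p) d with h | h
  · rw [if_pos h]
    rw [show (range 1).filter (fun j : ℕ => ((j : ℕ) : ZMod p) = d) = {0} by
      ext j; simp only [mem_filter, mem_range, Nat.lt_one_iff, mem_singleton]
      constructor
      · rintro ⟨h1, -⟩; exact h1
      · rintro rfl; exact ⟨rfl, by simpa using h⟩]
    simp
  · rw [if_neg h]
    rw [show (range 1).filter (fun j : ℕ => ((j : ℕ) : ZMod p) = d) = ∅ by
      ext j; simp only [mem_filter, mem_range, Nat.lt_one_iff, notMem_empty, iff_false]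
      rintro ⟨rfl, h2⟩; exact h (by simpa using h2)]
    simp

lemma Acnt_succ (k : ℕ) (d : ZMod p) :
    Acnt p (k + 1) d = Acnt p k d + Acnt p k (d - 1) := by
  have key : ∀ (m : ℕ) (e : ZMod p) (g : ℕ → ℤ),
      (∑ j ∈ (range (m + 1)).filter (fun j : ℕ => ((j : ℕ) : ZMod p) = e), g j)
        = ∑ j ∈ range (m + 1), if ((j : ℕ) : ZMod p) = e then g j else 0 := by
    intro m e g
    rw [Finset.sum_filter]
  rw [Acnt, Acnt, Acnt, key, key, key]
  rw [Finset.sum_range_succ' (fun j => if ((j : ℕ) : ZMod p) = d then ((k+1).choose j : ℤ) else 0) (k + 1)]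
  have peel : (∑ j ∈ range (k + 1), if ((j : ℕ) : ZMod p) = d then (k.choose j : ℤ) else 0)
      = (∑ j ∈ range k, if (((j+1 : ℕ) : ℕ) : ZMod p) = d then (k.choose (j+1) : ℤ) else 0)
        + (if ((0 : ℕ) : ZMod p) = d then (k.choose 0 : ℤ) else 0) :=
    Finset.sum_range_succ' _ k
  have hsplit : ∀ j ∈ range (k + 1),
      (if (((j + 1 : ℕ) : ℕ) : ZMod p) = d then ((k+1).choose (j+1) : ℤ) else 0)
        = (if (((j + 1 : ℕ) : ℕ) : ZMod p) = d then (k.choose (j+1) : ℤ) else 0)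
          + (if ((j : ℕ) : ZMod p) = d - 1 then (k.choose j : ℤ) else 0) := by
    intro j _
    have hc : (((j + 1 : ℕ) : ℕ) : ZMod p) = d ↔ ((j : ℕ) : ZMod p) = d - 1 := by
      push_cast
      constructor
      · intro h; rw [← h]; ring
      · intro h; rw [h]; ring
    rcases em ((((j + 1 : ℕ) : ℕ) : ZMod p) = d) with h | h
    · rw [if_pos h, if_pos h, if_pos (hc.mp h)]
      rw [Nat.choose_succ_succ]
      push_cast; ring
    · rw [if_neg h, if_neg h, if_neg (fun hh => h (hc.mpr hh))]
      ring
  rw [Finset.sum_congr rfl hsplit, Finset.sum_add_distrib]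
  have last0 : (∑ j ∈ range (k + 1), if (((j+1 : ℕ) : ℕ) : ZMod p) = d then (k.choose (j+1) : ℤ) else 0)
      = ∑ j ∈ range k, if (((j+1 : ℕ) : ℕ) : ZMod p) = d then (k.choose (j+1) : ℤ) else 0 := by
    rw [Finset.sum_range_succ]
    simp [Nat.choose_succ_self]
  rw [last0, peel]
  simp only [Nat.choose_zero_right]
  ring

lemma main_formula (k : ℕ) (d : ZMod p) :
    (p : ℤ) * (Ncnt p k d : ℤ)
      = (-1) ^ k * ((p : ℤ) * Acnt p k d + (2 - (p : ℤ)) ^ k - 2 ^ k) := by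
  induction k generalizing d with
  | zero =>
    rw [Ncnt_zero, Acnt_zero]
    rcases eq_or_ne d 0 with h | h
    · subst h; rw [if_pos rfl, if_pos rfl]; push_cast; ring
    · rw [if_neg h, if_neg (fun hh => h hh.symm)]; push_cast; ring
  | succ k ih =>
    have hp2 : 2 ≤ p := hp.out.two_le
    have h01 : (0 : ZMod p) ≠ 1 := by
      haveI : Nontrivial (ZMod p) := ZMod.nontrivial_iff.mpr (Nat.Prime.ne_one hp.out)
      exact zero_ne_one
    have hrec : (Ncnt p (k + 1) d : ℤ)
        = ((p : ℤ) - 2) ^ k - (Ncnt p k d : ℤ) - (Ncnt p k (d - 1) : ℤ) := by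
      have h1 : (Ncnt p (k + 1) d : ℤ) = ∑ s ∈ Ecnt p, (Ncnt p k (d - s) : ℤ) := by
        rw [Ncnt_succ]; push_cast; ring
      rw [h1, Ecnt_eq, Finset.sum_sdiff_eq_sub (subset_univ _)]
      have h2 : ∑ s : ZMod p, (Ncnt p k (d - s) : ℤ) = ((p : ℤ) - 2) ^ k := by
        rw [show ∑ s : ZMod p, (Ncnt p k (d - s) : ℤ) = ∑ e : ZMod p, (Ncnt p k e : ℤ) from
          Fintype.sum_equiv (Equiv.subLeft d) _ _ (fun s => rfl)]
        rw [← Nat.cast_sum, Ncnt_total]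
        push_cast [Nat.cast_sub hp2]
        ring
      have h3 : ∑ s ∈ ({0, 1} : Finset (ZMod p)), (Ncnt p k (d - s) : ℤ)
          = (Ncnt p k d : ℤ) + (Ncnt p k (d - 1) : ℤ) := by
        rw [Finset.sum_insert (by simpa using h01), Finset.sum_singleton]
        simp
      rw [h2, h3]
      ring
    have ih1 := ih d
    have ih2 := ih (d - 1)
    have hpow : ((p : ℤ) - 2) ^ k = (-1) ^ k * (2 - (p : ℤ)) ^ k := by
      rw [← neg_one_mul, ← mul_pow]
      ring_nf
    rw [hrec, Acnt_succ]
    linear_combination (-1 : ℤ) * ih1 + (-1 : ℤ) * ih2 + (p : ℤ) * hpow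
end Aux

theorem phi_prime (p : ℕ) (hp : p.Prime) (k : ℕ) (hk : 2 ≤ k) (c : ℤ) :
    (p : ℤ) * (phi k p c : ℤ) =
      (-1) ^ k * ((p : ℤ) * (∑ j ∈ (Finset.range (k + 1)).filter
            (fun j : ℕ => (j : ℤ) % (p : ℤ) = c % (p : ℤ)), (k.choose j : ℤ))
          + (2 - (p : ℤ)) ^ k - 2 ^ k) := by
  haveI : Fact p.Prime := ⟨hp⟩
  have hphi : phi k p c = Ncnt p k ((c : ℤ) : ZMod p) := rfl
  have hA : Acnt p k ((c : ℤ) : ZMod p)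
      = ∑ j ∈ (Finset.range (k + 1)).filter
          (fun j : ℕ => (j : ℤ) % (p : ℤ) = c % (p : ℤ)), (k.choose j : ℤ) := by
    rw [Acnt]
    apply Finset.sum_congr _ (fun _ _ => rfl)
    apply Finset.filter_congr
    intro j _
    rw [show ((j : ℕ) : ZMod p) = (((j : ℕ) : ℤ) : ZMod p) by push_cast; ring]
    rw [ZMod.intCast_eq_intCast_iff']
  rw [hphi, main_formula, hA]
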